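/- Let a,b be positive integers with b ≤ a, let x ∈ ℝ^d, v = (v', v_d) ∈ ℝ^{d-1} × ℝ, and define the curve c(t) = x + (t^a v', t^b v_d). Let f be C^a in a neighborhood of the image of c near t = 0. Then for 0 ≤ k < a: if k = jb for some integer j ≥ 1, then (1/k!)(f∘c)^{(k)}(0) = (1/j!) f^{(j)}(x)((0,v_d)^j), and (f∘c)^{(k)}(0) = 0 if k is not a multiple of b and k ≠ 0. Moreover, (1/a!)(f∘c)^{(a)}(0) = f'(x)(v',0) if a is not a multiple of b, and (1/a!)(f∘c)^{(a)}(0) = f'(x)(v',0) + (1/j!) f^{(j)}(x)((0,v_d)^j) if a = jb. -/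

import Mathlib

open Set Filter Asymptotics

section Aux

variable {E F : Type*} [NormedAddCommGroup E] [NormedSpace ℝ E]
  [NormedAddCommGroup F] [NormedSpace ℝ F]

lemma stmt2_peano_step {G : ℝ → ℝ} {n : ℕ} {s : Set ℝ} (hs : IsOpen s) (h0 : (0:ℝ) ∈ s)
    (hG0 : G 0 = 0) (hdiff : ∀ t ∈ s, DifferentiableAt ℝ G t)
    (ho : (fun t => deriv G t) =o[nhds 0] fun t => t ^ n) :
    G =o[nhds 0] fun t => t ^ (n+1) := by
  rw [isLittleO_iff] at ho ⊢
  intro c hc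
  obtain ⟨δ₁, hδ₁, hball⟩ := Metric.eventually_nhds_iff_ball.1 (ho hc)
  obtain ⟨δ₂, hδ₂, hball2⟩ := Metric.isOpen_iff.1 hs 0 h0
  rw [Metric.eventually_nhds_iff_ball]
  refine ⟨min δ₁ δ₂, lt_min hδ₁ hδ₂, fun t ht => ?_⟩
  have htb : |t| < min δ₁ δ₂ := by simpa [Real.dist_eq] using ht
  have hsub : ∀ y ∈ Metric.closedBall (0:ℝ) |t|, y ∈ Metric.ball (0:ℝ) δ₁ ∧ y ∈ s := by
    intro y hy
    simp only [Metric.mem_closedBall, Real.dist_eq, sub_zero] at hy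
    constructor
    · simp only [Metric.mem_ball, Real.dist_eq, sub_zero]
      exact lt_of_le_of_lt hy (htb.trans_le (min_le_left _ _))
    · apply hball2
      simp only [Metric.mem_ball, Real.dist_eq, sub_zero]
      exact lt_of_le_of_lt hy (htb.trans_le (min_le_right _ _))
  have key : ‖G t - G 0‖ ≤ c * |t| ^ n * ‖t - 0‖ := by
    refine (convex_closedBall (0:ℝ) |t|).norm_image_sub_le_of_norm_hasDerivWithin_le
      (f' := fun y => deriv G y)
      (fun y hy => ((hdiff y (hsub y hy).2).hasDerivAt).hasDerivWithinAt)
      (fun y hy => ?_) ?_ ?_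
    · have h1 : ‖deriv G y‖ ≤ c * ‖y ^ n‖ := hball y (hsub y hy).1
      refine h1.trans ?_
      have : ‖y ^ n‖ ≤ |t| ^ n := by
        rw [Real.norm_eq_abs, abs_pow]
        exact pow_le_pow_left₀ (abs_nonneg _) (by simpa [Real.dist_eq] using hy) n
      nlinarith [hc.le]
    · simp [abs_nonneg]
    · simp [Metric.mem_closedBall, Real.dist_eq]
  rw [hG0, sub_zero] at key
  calc ‖G t‖ ≤ c * |t| ^ n * ‖t - 0‖ := key
    _ = c * ‖t ^ (n+1)‖ := by
        rw [sub_zero, Real.norm_eq_abs, Real.norm_eq_abs, abs_pow, pow_succ]; ring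

lemma stmt2_peano {s : Set ℝ} (hs : IsOpen s) (h0 : (0:ℝ) ∈ s) :
    ∀ (n : ℕ) (g : ℝ → ℝ), ContDiffOn ℝ n g s →
    (fun t => g t - ∑ k ∈ Finset.range (n+1),
      (iteratedDeriv k g 0 / (Nat.factorial k : ℝ)) * t ^ k) =o[nhds 0] fun t => t ^ n := by
  intro n
  induction n with
  | zero =>
    intro g hg
    have hcont : ContinuousAt g 0 := (hg.continuousOn.continuousAt (hs.mem_nhds h0))
    have : (fun t => g t - g 0) =o[nhds 0] (fun _ : ℝ => (1:ℝ)) := by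
      rw [isLittleO_one_iff]
      have := (hcont.fun_sub (continuousAt_const (y := g 0))).tendsto
      simpa using this
    refine this.congr (fun t => ?_) (fun t => by simp)
    simp [iteratedDeriv_zero]
  | succ n IH =>
    intro g hg
    set c : ℕ → ℝ := fun k => iteratedDeriv k g 0 / (Nat.factorial k : ℝ) with hc
    set G : ℝ → ℝ := fun t => g t - ∑ k ∈ Finset.range (n+2), c k * t ^ k with hG
    have hdg : ContDiffOn ℝ n (deriv g) s := hg.deriv_of_isOpen hs le_rfl
    have hGd : ∀ t ∈ s, DifferentiableAt ℝ G t := by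
      intro t ht
      apply DifferentiableAt.sub
      · exact (hg.differentiableOn (by simp)).differentiableAt
          (hs.mem_nhds ht)
      · exact (DifferentiableAt.fun_sum fun k _ =>
          (differentiableAt_const _).mul (differentiableAt_pow k))
    have hG0 : G 0 = 0 := by
      simp only [hG]
      rw [Finset.sum_eq_single 0]
      · simp [hc, iteratedDeriv_zero]
      · intro k _ hk; simp [zero_pow hk]
      · simp
    have hderivG : ∀ t ∈ s, deriv G t =
        deriv g t - ∑ k ∈ Finset.range (n+1), (iteratedDeriv k (deriv g) 0 /
          (Nat.factorial k : ℝ)) * t ^ k := by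
      intro t ht
      have hdg' : DifferentiableAt ℝ g t :=
        (hg.differentiableOn (by simp)).differentiableAt
          (hs.mem_nhds ht)
      have hpoly : DifferentiableAt ℝ (fun t => ∑ k ∈ Finset.range (n+2), c k * t ^ k) t :=
        DifferentiableAt.fun_sum fun k _ => (differentiableAt_const _).mul (differentiableAt_pow k)
      rw [hG]
      rw [deriv_fun_sub hdg' hpoly]
      congr 1
      rw [deriv_fun_sum (fun k _ => (differentiableAt_const _).mul (differentiableAt_pow k))]
      have : ∀ k ∈ Finset.range (n+2), deriv (fun t => c k * t ^ k) t
          = c k * (k * t ^ (k-1)) := by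
        intro k _
        rw [deriv_const_mul _ (differentiableAt_pow k), deriv_pow_field]
      rw [Finset.sum_congr rfl this]
      rw [Finset.sum_range_succ']
      simp only [Nat.cast_zero, pow_zero, mul_zero, zero_mul, add_zero, Nat.add_sub_cancel]
      apply Finset.sum_congr rfl
      intro k _
      rw [← iteratedDeriv_succ']
      simp only [hc]
      rw [Nat.factorial_succ]
      push_cast
      have hk1 : (k:ℝ) + 1 ≠ 0 := by positivity
      have hf1 : (Nat.factorial k : ℝ) ≠ 0 := by exact_mod_cast (Nat.factorial_pos k).ne'
      field_simp
    have hoG : (fun t => deriv G t) =o[nhds 0] fun t => t ^ n := by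
      have hIH := IH (deriv g) hdg
      refine hIH.congr' ?_ EventuallyEq.rfl
      filter_upwards [hs.mem_nhds h0] with t ht
      exact (hderivG t ht).symm
    exact stmt2_peano_step hs h0 hG0 hGd hoG

lemma stmt2_poly_tendsto (n : ℕ) (p : ℕ → ℝ) :
    Tendsto (fun t : ℝ => ∑ k ∈ Finset.range (n+1), p k * t ^ k) (nhds 0) (nhds (p 0)) := by
  have hcont : Continuous (fun t : ℝ => ∑ k ∈ Finset.range (n+1), p k * t ^ k) := by
    continuity
  have := hcont.tendsto 0
  convert this using 2
  rw [Finset.sum_eq_single 0]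
  · simp
  · intro k _ hk; simp [zero_pow hk]
  · simp

lemma stmt2_poly_head_zero (n : ℕ) (p : ℕ → ℝ)
    (h : (fun t : ℝ => ∑ k ∈ Finset.range (n+1), p k * t ^ k) =o[nhdsWithin 0 {(0:ℝ)}ᶜ]
      fun t => t ^ n) : p 0 = 0 := by
  have h1 : Tendsto (fun t : ℝ => ∑ k ∈ Finset.range (n+1), p k * t ^ k)
      (nhdsWithin 0 {(0:ℝ)}ᶜ) (nhds 0) := by
    rw [← isLittleO_one_iff ℝ]
    refine h.trans_isBigO ?_
    rw [isBigO_iff]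
    refine ⟨1, ?_⟩
    have : ∀ᶠ t : ℝ in nhdsWithin 0 {(0:ℝ)}ᶜ, |t| ≤ 1 := by
      apply eventually_nhdsWithin_of_eventually_nhds
      filter_upwards [Metric.eventually_nhds_iff_ball.2 ⟨1, one_pos, fun y hy => hy⟩] with t ht
      simp only [Metric.mem_ball, Real.dist_eq, sub_zero] at ht
      exact ht.le
    filter_upwards [this] with t ht
    simp only [Real.norm_eq_abs, abs_pow, norm_one, one_mul]
    exact pow_le_one₀ (abs_nonneg t) ht
  have h2 := (stmt2_poly_tendsto n p).mono_left (nhdsWithin_le_nhds (s := {(0:ℝ)}ᶜ))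
  exact tendsto_nhds_unique h2 h1

lemma stmt2_poly_vanish : ∀ (n : ℕ) (p : ℕ → ℝ),
    ((fun t : ℝ => ∑ k ∈ Finset.range (n+1), p k * t ^ k) =o[nhdsWithin 0 {(0:ℝ)}ᶜ]
      fun t => t ^ n) → ∀ k ≤ n, p k = 0 := by
  intro n
  induction n with
  | zero =>
    intro p h k hk
    interval_cases k
    exact stmt2_poly_head_zero 0 p h
  | succ n IH =>
    intro p h k hk
    have hp0 : p 0 = 0 := stmt2_poly_head_zero (n+1) p h
    have hsum : ∀ t : ℝ, ∑ k ∈ Finset.range (n+2), p k * t ^ k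
        = t * ∑ k ∈ Finset.range (n+1), p (k+1) * t ^ k := by
      intro t
      rw [Finset.sum_range_succ']
      rw [Finset.mul_sum]
      simp only [hp0, zero_mul, pow_zero, mul_one, add_zero]
      apply Finset.sum_congr rfl
      intro k _
      ring
    have h' : (fun t : ℝ => t * ∑ k ∈ Finset.range (n+1), p (k+1) * t ^ k)
        =o[nhdsWithin 0 {(0:ℝ)}ᶜ] fun t => t * t ^ n := by
      refine (h.congr (fun t => hsum t) (fun t => ?_))
      rw [pow_succ]; ring
    have h'' : (fun t : ℝ => ∑ k ∈ Finset.range (n+1), p (k+1) * t ^ k)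
        =o[nhdsWithin 0 {(0:ℝ)}ᶜ] fun t => t ^ n := by
      rw [isLittleO_iff] at h' ⊢
      intro c hc
      filter_upwards [h' hc, self_mem_nhdsWithin] with t ht ht0
      have ht0' : t ≠ 0 := ht0
      rw [Real.norm_eq_abs, Real.norm_eq_abs, abs_mul, abs_mul] at ht
      rw [Real.norm_eq_abs, Real.norm_eq_abs]
      have habs : 0 < |t| := abs_pos.2 ht0'
      have h2 : |t| * |∑ k ∈ Finset.range (n+1), p (k+1) * t ^ k| ≤ |t| * (c * |t ^ n|) := by
        calc |t| * |∑ k ∈ Finset.range (n+1), p (k+1) * t ^ k| ≤ c * (|t| * |t ^ n|) := ht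
          _ = |t| * (c * |t ^ n|) := by ring
      exact le_of_mul_le_mul_left h2 habs
    match k, hk with
    | 0, _ => exact hp0
    | (m+1), hk => exact IH (fun j => p (j+1)) h'' m (by omega)

lemma fderiv_comp_const_add' (f : E → F) (x y : E) :
    fderiv ℝ (fun z => f (x + z)) y = fderiv ℝ f (x + y) := by
  by_cases h : DifferentiableAt ℝ f (x + y)
  · have h1 : HasFDerivAt (fun z : E => x + z) (ContinuousLinearMap.id ℝ E) y := by
      simpa using (hasFDerivAt_id y).const_add x
    have := (h.hasFDerivAt.comp y h1).fderiv
    exact this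
  · have h2 : ¬ DifferentiableAt ℝ (fun z => f (x + z)) y := by
      intro hd
      apply h
      have : DifferentiableAt ℝ (fun z : E => (fun z => f (x + z)) (-x + z)) (x + y) := by
        have hd' : DifferentiableAt ℝ (fun z => f (x + z)) (-x + (x + y)) := by
          simpa using hd
        exact hd'.comp (x + y) (differentiableAt_id.const_add (-x))
      simpa using this
    rw [fderiv_zero_of_not_differentiableAt h, fderiv_zero_of_not_differentiableAt h2]

lemma iteratedFDeriv_comp_const_add (n : ℕ) (f : E → F) (x : E) :
    ∀ y : E, iteratedFDeriv ℝ n (fun z => f (x + z)) y = iteratedFDeriv ℝ n f (x + y) := by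
  induction n with
  | zero => intro y; ext m; simp
  | succ n IH =>
    intro y
    ext m
    rw [iteratedFDeriv_succ_apply_left, iteratedFDeriv_succ_apply_left]
    have h1 : fderiv ℝ (iteratedFDeriv ℝ n fun z => f (x + z)) y
        = fderiv ℝ (fun z => iteratedFDeriv ℝ n f (x + z)) y := by
      congr 1
      funext z
      exact IH z
    rw [h1, fderiv_comp_const_add' (iteratedFDeriv ℝ n f) x y]

lemma stmt2_iteratedDeriv_line (f : E → ℝ) {U : Set E} (hU : IsOpen U) {x : E} (hx : x ∈ U)
    (w : E) {N : ℕ} (hf : ContDiffOn ℝ (N : ℕ∞) f U) {j : ℕ} (hj : j ≤ N) :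
    iteratedDeriv j (fun u : ℝ => f (x + u • w)) 0
      = iteratedFDerivWithin ℝ j f U x (fun _ => w) := by
  obtain ⟨δ, hδ, hball⟩ := Metric.isOpen_iff.1 hU x hx
  set f' : E → ℝ := fun y => f (x + y) with hf'def
  set B' : Set E := Metric.ball (0 : E) δ with hB'
  have hB'open : IsOpen B' := Metric.isOpen_ball
  have hf' : ContDiffOn ℝ (N : ℕ∞) f' B' := by
    apply hf.comp ((contDiff_const.add contDiff_id).contDiffOn)
    intro y hy
    apply hball
    rw [hB', Metric.mem_ball] at hy
    simpa [Metric.mem_ball, dist_eq_norm] using hy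
  set T : ℝ →L[ℝ] E := ContinuousLinearMap.toSpanSingleton ℝ w with hT
  set S : Set ℝ := T ⁻¹' B' with hS
  have hSopen : IsOpen S := hB'open.preimage T.continuous
  have h0S : (0 : ℝ) ∈ S := by
    simp [hS, hB', hT, hδ]
  have key := T.iteratedFDerivWithin_comp_right hf' hB'open.uniqueDiffOn hSopen.uniqueDiffOn
    (x := 0) (by rw [hS, mem_preimage] at h0S; exact h0S) (mod_cast hj)
  have happ := congrArg (fun (M : ContinuousMultilinearMap ℝ (fun _ : Fin j => ℝ) ℝ) =>
    M (fun _ => (1:ℝ))) key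
  simp only [ContinuousMultilinearMap.compContinuousLinearMap_apply] at happ
  have hT1 : T 1 = w := by simp [hT, ContinuousLinearMap.toSpanSingleton_apply]
  rw [hT1] at happ
  have hLHS : iteratedFDerivWithin ℝ j (f' ∘ T) S 0 (fun _ => (1:ℝ))
      = iteratedDeriv j (fun u : ℝ => f (x + u • w)) 0 := by
    rw [iteratedFDerivWithin_of_isOpen j hSopen h0S]
    rw [iteratedDeriv_eq_iteratedFDeriv]
    congr 1
  have hRHS : iteratedFDerivWithin ℝ j f' B' (T 0) = iteratedFDerivWithin ℝ j f U x := by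
    have h0B' : (0 : E) ∈ B' := by simp [hB', hδ]
    rw [show T 0 = (0:E) by simp]
    rw [iteratedFDerivWithin_of_isOpen j hB'open h0B']
    rw [iteratedFDeriv_comp_const_add j f x 0, add_zero]
    exact (iteratedFDerivWithin_of_isOpen j hU hx).symm
  rw [hLHS, hRHS] at happ
  exact happ

end Aux

set_option maxHeartbeats 2000000 in
/-- derivatives at `0` of `f ∘ c` for `c(t) = x + (t^a v', t^b v_d)`, with
`1 ≤ b ≤ a` and `f` of class `C^a` on an open neighborhood of the image of `c` near `t = 0`. -/
theorem stmt2 (e a b : ℕ) (hb : 0 < b) (hba : b ≤ a)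
    (x : EuclideanSpace ℝ (Fin e) × ℝ) (v' : EuclideanSpace ℝ (Fin e)) (vd : ℝ)
    (f : EuclideanSpace ℝ (Fin e) × ℝ → ℝ)
    (U : Set (EuclideanSpace ℝ (Fin e) × ℝ)) (hU : IsOpen U)
    (ε : ℝ) (hε : 0 < ε)
    (hmem : ∀ t : ℝ, |t| < ε → x + (t ^ a • v', t ^ b * vd) ∈ U)
    (hf : ContDiffOn ℝ (a : ℕ∞) f U) :
    (∀ j k : ℕ, 1 ≤ j → k = j * b → k < a →
      (1 / (Nat.factorial k : ℝ)) *
          iteratedDeriv k (fun t : ℝ => f (x + (t ^ a • v', t ^ b * vd))) 0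
        = (1 / (Nat.factorial j : ℝ)) *
            iteratedFDerivWithin ℝ j f U x (fun _ => ((0 : EuclideanSpace ℝ (Fin e)), vd))) ∧
    (∀ k : ℕ, k < a → ¬ b ∣ k → k ≠ 0 →
      iteratedDeriv k (fun t : ℝ => f (x + (t ^ a • v', t ^ b * vd))) 0 = 0) ∧
    (¬ b ∣ a →
      (1 / (Nat.factorial a : ℝ)) *
          iteratedDeriv a (fun t : ℝ => f (x + (t ^ a • v', t ^ b * vd))) 0
        = fderivWithin ℝ f U x (v', (0 : ℝ))) ∧
    (∀ j : ℕ, a = j * b →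
      (1 / (Nat.factorial a : ℝ)) *
          iteratedDeriv a (fun t : ℝ => f (x + (t ^ a • v', t ^ b * vd))) 0
        = fderivWithin ℝ f U x (v', (0 : ℝ)) +
            (1 / (Nat.factorial j : ℝ)) *
              iteratedFDerivWithin ℝ j f U x (fun _ => ((0 : EuclideanSpace ℝ (Fin e)), vd))) := by
  classical
  have ha : 0 < a := lt_of_lt_of_le hb hba
  set w' : EuclideanSpace ℝ (Fin e) × ℝ := (v', (0:ℝ)) with hw'def
  set w : EuclideanSpace ℝ (Fin e) × ℝ := ((0 : EuclideanSpace ℝ (Fin e)), vd) with hwdef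
  set g : ℝ → ℝ := fun t => f (x + (t ^ a • v', t ^ b * vd)) with hgdef
  have hcurve : ∀ t : ℝ, x + (t ^ a • v', t ^ b * vd) = x + t ^ a • w' + t ^ b • w := by
    intro t
    rw [hw'def, hwdef, add_assoc]
    congr 1
    rw [Prod.smul_mk, Prod.smul_mk, Prod.mk_add_mk]
    simp [smul_eq_mul]
  have hxU : x ∈ U := by
    have h0 := hmem 0 (by simpa using hε)
    simpa [zero_pow ha.ne', zero_pow hb.ne', Prod.mk_zero_zero] using h0
  obtain ⟨δ, hδ, hballU⟩ := Metric.isOpen_iff.1 hU x hxU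
  -- the one-variable function along the vertical line
  set φ : ℝ → ℝ := fun u => f (x + u • w) with hφdef
  set δφ : ℝ := δ / (‖w‖ + 1) with hδφdef
  have hwpos : (0:ℝ) < ‖w‖ + 1 := by positivity
  have hδφ : 0 < δφ := div_pos hδ hwpos
  have hφ : ContDiffOn ℝ (a : ℕ∞) φ (Metric.ball (0:ℝ) δφ) := by
    apply hf.comp
    · exact (contDiff_const.add (contDiff_id.smul contDiff_const)).contDiffOn
    · intro u hu
      apply hballU
      simp only [Metric.mem_ball, Real.dist_eq, sub_zero] at hu
      simp only [Metric.mem_ball, dist_eq_norm, add_sub_cancel_left]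
      rw [norm_smul]
      calc ‖u‖ * ‖w‖ ≤ |u| * (‖w‖ + 1) := by
            rw [Real.norm_eq_abs]
            have := abs_nonneg u
            nlinarith [norm_nonneg w]
        _ < δφ * (‖w‖ + 1) := by
            exact mul_lt_mul_of_pos_right hu hwpos
        _ = δ := by rw [hδφdef]; field_simp
  set d : ℕ → ℝ := fun j => iteratedDeriv j φ 0 / (Nat.factorial j : ℝ) with hddef
  set L : ℝ := fderiv ℝ f x w' with hLdef
  set q : ℕ → ℝ := fun k =>
    (if k = a then L else 0) + (if b ∣ k then d (k / b) else 0) with hqdef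
  -- h2 : composition of the expansion of φ with t^b
  have hφo := stmt2_peano Metric.isOpen_ball (Metric.mem_ball_self hδφ) a φ hφ
  have htb : Tendsto (fun t : ℝ => t ^ b) (nhds 0) (nhds 0) := by
    have := (continuous_pow b (M := ℝ)).tendsto 0
    simpa [zero_pow hb.ne'] using this
  have h2 : (fun t : ℝ => φ (t ^ b) - ∑ j ∈ Finset.range (a+1), d j * (t ^ b) ^ j)
      =o[nhds 0] fun t => t ^ a := by
    have hcomp := hφo.comp_tendsto htb
    refine hcomp.trans_isBigO ?_
    rw [isBigO_iff]
    refine ⟨1, ?_⟩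
    filter_upwards [Metric.eventually_nhds_iff_ball.2
      ⟨1, one_pos, fun y hy => hy⟩] with t ht
    simp only [Metric.mem_ball, Real.dist_eq, sub_zero] at ht
    simp only [Function.comp_apply, Real.norm_eq_abs, one_mul, abs_pow]
    rw [← pow_mul]
    exact pow_le_pow_of_le_one (abs_nonneg t) ht.le (Nat.le_mul_of_pos_left a hb)
  -- h1 : the horizontal correction
  have hone : (1 : WithTop ℕ∞) ≤ ((a : ℕ∞) : WithTop ℕ∞) := by exact_mod_cast ha
  have hfd : ∀ y ∈ U, DifferentiableAt ℝ f y := fun y hy =>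
    (hf.differentiableOn (by exact_mod_cast ha.ne')).differentiableAt (hU.mem_nhds hy)
  have hcontfd : ContinuousAt (fun y => fderiv ℝ f y) x := by
    have h₁ := hf.continuousOn_fderivWithin hU.uniqueDiffOn hone
    have h₂ : ContinuousOn (fun y => fderiv ℝ f y) U :=
      h₁.congr fun y hy => (fderivWithin_of_isOpen hU hy).symm
    exact h₂.continuousAt (hU.mem_nhds hxU)
  have h1 : (fun t : ℝ => g t - φ (t ^ b) - t ^ a * L) =o[nhds 0] fun t => t ^ a := by
    rw [isLittleO_iff]
    intro c hc
    have hw'pos : (0:ℝ) < ‖w'‖ + 1 := by positivity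
    set ε'' : ℝ := c / (‖w'‖ + 1) with hε''def
    have hε''pos : 0 < ε'' := div_pos hc hw'pos
    obtain ⟨δ₁, hδ₁pos, hδ₁⟩ := Metric.continuousAt_iff.1 hcontfd ε'' hε''pos
    set δ₂ : ℝ := min δ₁ δ with hδ₂def
    have hδ₂pos : 0 < δ₂ := lt_min hδ₁pos hδ
    set r : ℝ := min 1 (δ₂ / (‖w'‖ + ‖w‖ + 1)) with hrdef
    have hwwpos : (0:ℝ) < ‖w'‖ + ‖w‖ + 1 := by positivity
    have hrpos : 0 < r := lt_min one_pos (div_pos hδ₂pos hwwpos)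
    rw [Metric.eventually_nhds_iff_ball]
    refine ⟨r, hrpos, fun t ht => ?_⟩
    simp only [Metric.mem_ball, Real.dist_eq, sub_zero] at ht
    have ht1 : |t| ≤ 1 := (ht.trans_le (min_le_left _ _)).le
    -- key membership fact
    have hpmem : ∀ s : ℝ, |s| ≤ |t| ^ a →
        x + s • w' + t ^ b • w ∈ Metric.ball x δ₂ := by
      intro s hs
      simp only [Metric.mem_ball, dist_eq_norm]
      have hnorm : ‖x + s • w' + t ^ b • w - x‖ ≤ |s| * ‖w'‖ + |t| ^ b * ‖w‖ := by
        have : x + s • w' + t ^ b • w - x = s • w' + t ^ b • w := by abel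
        rw [this]
        refine (norm_add_le _ _).trans ?_
        rw [norm_smul, norm_smul, Real.norm_eq_abs, Real.norm_eq_abs, abs_pow]
      have hta : |t| ^ a ≤ |t| := pow_le_of_le_one (abs_nonneg t) ht1 ha.ne'
      have htbb : |t| ^ b ≤ |t| := pow_le_of_le_one (abs_nonneg t) ht1 hb.ne'
      have htr : |t| * (‖w'‖ + ‖w‖ + 1) < δ₂ := by
        have h' : |t| < δ₂ / (‖w'‖ + ‖w‖ + 1) := ht.trans_le (min_le_right _ _)
        calc |t| * (‖w'‖ + ‖w‖ + 1) < (δ₂ / (‖w'‖ + ‖w‖ + 1)) * (‖w'‖ + ‖w‖ + 1) :=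
              mul_lt_mul_of_pos_right h' hwwpos
          _ = δ₂ := by field_simp
      refine hnorm.trans_lt (lt_of_le_of_lt ?_ htr)
      have h1' : |s| * ‖w'‖ ≤ |t| * ‖w'‖ :=
        mul_le_mul_of_nonneg_right (hs.trans hta) (norm_nonneg _)
      have h2' : |t| ^ b * ‖w‖ ≤ |t| * ‖w‖ :=
        mul_le_mul_of_nonneg_right htbb (norm_nonneg _)
      nlinarith [abs_nonneg t]
    set K : Set ℝ := Metric.closedBall (0:ℝ) (|t| ^ a) with hKdef
    set ψ : ℝ → ℝ := fun s => f (x + s • w' + t ^ b • w) - s * L with hψdef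
    have hmean : ‖ψ (t ^ a) - ψ 0‖ ≤ c * ‖t ^ a - 0‖ := by
      refine (convex_closedBall (0:ℝ) (|t| ^ a)).norm_image_sub_le_of_norm_hasDerivWithin_le
        (f' := fun s => fderiv ℝ f (x + s • w' + t ^ b • w) w' - L)
        (fun s hs => ?_) (fun s hs => ?_) ?_ ?_
      · show HasDerivWithinAt ψ (fderiv ℝ f (x + s • w' + t ^ b • w) w' - L) K s
        simp only [Metric.mem_closedBall, Real.dist_eq, sub_zero] at hs
        have hpU : x + s • w' + t ^ b • w ∈ U := by
          apply hballU
          have := hpmem s hs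
          simp only [Metric.mem_ball] at this ⊢
          exact this.trans_le (min_le_right _ _)
        have hγ : HasDerivAt (fun s : ℝ => x + s • w' + t ^ b • w) w' s := by
          have h₁ : HasDerivAt (fun s : ℝ => s • w') w' s := by
            simpa using (hasDerivAt_id s).smul_const w'
          exact (h₁.const_add x).add_const (t ^ b • w)
        have hcomp := ((hfd _ hpU).hasFDerivAt.comp_hasDerivAt s hγ)
        exact ((hcomp.sub (hasDerivAt_mul_const L)).hasDerivWithinAt)
      · show ‖fderiv ℝ f (x + s • w' + t ^ b • w) w' - L‖ ≤ c
        simp only [Metric.mem_closedBall, Real.dist_eq, sub_zero] at hs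
        have hball₁ : x + s • w' + t ^ b • w ∈ Metric.ball x δ₁ := by
          have := hpmem s hs
          simp only [Metric.mem_ball] at this ⊢
          exact this.trans_le (min_le_left _ _)
        have hdist := hδ₁ (by simpa [Metric.mem_ball] using hball₁)
        rw [dist_eq_norm] at hdist
        have happ : fderiv ℝ f (x + s • w' + t ^ b • w) w' - L
            = (fderiv ℝ f (x + s • w' + t ^ b • w) - fderiv ℝ f x) w' := by
          simp [hLdef]
        rw [Real.norm_eq_abs, happ]
        calc |(fderiv ℝ f (x + s • w' + t ^ b • w) - fderiv ℝ f x) w'|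
            ≤ ‖fderiv ℝ f (x + s • w' + t ^ b • w) - fderiv ℝ f x‖ * ‖w'‖ :=
              (fderiv ℝ f (x + s • w' + t ^ b • w) - fderiv ℝ f x).le_opNorm w'
          _ ≤ ε'' * (‖w'‖ + 1) := by
              have := norm_nonneg w'
              nlinarith [hdist.le, hε''pos.le, norm_nonneg
                (fderiv ℝ f (x + s • w' + t ^ b • w) - fderiv ℝ f x)]
          _ = c := by rw [hε''def]; field_simp
      · simp [Metric.mem_closedBall, Real.dist_eq, pow_nonneg (abs_nonneg t) a]
      · simp only [Metric.mem_closedBall, Real.dist_eq, sub_zero]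
        rw [abs_pow]
    have hval : ψ (t ^ a) - ψ 0 = g t - φ (t ^ b) - t ^ a * L := by
      simp only [hψdef, hφdef, hgdef]
      rw [hcurve t]
      simp only [zero_smul, add_zero, zero_mul, sub_zero]
      ring
    rw [hval] at hmean
    simpa using hmean
  -- h3 : leftover high-order terms
  have h3 : (fun t : ℝ => ∑ j ∈ (Finset.range (a+1)).filter (fun j => ¬ j * b ≤ a),
      d j * (t ^ b) ^ j) =o[nhds 0] fun t => t ^ a := by
    apply IsLittleO.fun_sum
    intro j hj
    simp only [Finset.mem_filter, Finset.mem_range, not_le] at hj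
    have hlt : a < b * j := by rw [Nat.mul_comm]; omega
    have hppow : (fun t : ℝ => t ^ (b * j)) =o[nhds 0] fun t => t ^ a :=
      isLittleO_pow_pow hlt
    have := hppow.const_mul_left (d j)
    refine this.congr (fun t => ?_) (fun t => rfl)
    rw [pow_mul]
  -- the polynomial sum identity
  have hq : ∀ t : ℝ, ∑ k ∈ Finset.range (a+1), q k * t ^ k
      = L * t ^ a + ∑ j ∈ (Finset.range (a+1)).filter (fun j => j * b ≤ a),
          d j * (t ^ b) ^ j := by
    intro t
    have hsplit : ∀ k, q k * t ^ k = (if k = a then L * t ^ k else 0)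
        + (if b ∣ k then d (k / b) * t ^ k else 0) := by
      intro k
      simp only [hqdef]
      split_ifs <;> ring
    rw [Finset.sum_congr rfl (fun k _ => hsplit k), Finset.sum_add_distrib]
    congr 1
    · rw [Finset.sum_ite_eq' (Finset.range (a+1)) a (fun k => L * t ^ k)]
      simp
    · rw [← Finset.sum_filter]
      refine Finset.sum_nbij' (fun k => k / b) (fun j => j * b) ?_ ?_ ?_ ?_ ?_
      · intro k hk
        simp only [Finset.mem_filter, Finset.mem_range] at hk ⊢
        obtain ⟨hk1, hk2⟩ := hk
        constructor
        · have := Nat.div_le_self k b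
          omega
        · rw [Nat.div_mul_cancel hk2]; omega
      · intro j hj
        simp only [Finset.mem_filter, Finset.mem_range] at hj ⊢
        exact ⟨by omega, dvd_mul_left b j⟩
      · intro k hk
        simp only [Finset.mem_filter, Finset.mem_range] at hk
        exact Nat.div_mul_cancel hk.2
      · intro j hj
        exact Nat.mul_div_cancel j hb
      · intro k hk
        simp only [Finset.mem_filter, Finset.mem_range] at hk
        congr 1
        rw [← pow_mul, Nat.mul_comm b (k / b), Nat.div_mul_cancel hk.2]
  -- master estimate
  have hmaster : (fun t : ℝ => g t - ∑ k ∈ Finset.range (a+1), q k * t ^ k)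
      =o[nhds 0] fun t => t ^ a := by
    have hsum := (h1.add h2).add h3
    refine hsum.congr (fun t => ?_) (fun t => rfl)
    rw [hq t, ← Finset.sum_filter_add_sum_filter_not (Finset.range (a+1))
      (fun j => j * b ≤ a) (fun j => d j * (t ^ b) ^ j)]
    ring
  -- Peano expansion for g
  have hIoo : (0:ℝ) ∈ Ioo (-ε) ε := ⟨by linarith, hε⟩
  have hgc : ContDiffOn ℝ (a : ℕ∞) g (Ioo (-ε) ε) := by
    apply hf.comp
    · exact (contDiff_const.add
        (((contDiff_id.pow a).fun_smul contDiff_const).prodMk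
          ((contDiff_id.pow b).mul contDiff_const))).contDiffOn
    · intro t ht
      exact hmem t (abs_lt.2 ⟨ht.1, ht.2⟩)
  have hpg := stmt2_peano isOpen_Ioo hIoo a g hgc
  set cg : ℕ → ℝ := fun k => iteratedDeriv k g 0 / (Nat.factorial k : ℝ) with hcgdef
  have hdiffo : (fun t : ℝ => ∑ k ∈ Finset.range (a+1), (q k - cg k) * t ^ k)
      =o[nhdsWithin 0 {(0:ℝ)}ᶜ] fun t => t ^ a := by
    have := hpg.sub hmaster
    have h' := this.mono (nhdsWithin_le_nhds (s := {(0:ℝ)}ᶜ))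
    refine h'.congr (fun t => ?_) (fun t => rfl)
    have hsub : ∑ k ∈ Finset.range (a+1), (q k - cg k) * t ^ k
        = (∑ k ∈ Finset.range (a+1), q k * t ^ k)
          - ∑ k ∈ Finset.range (a+1), cg k * t ^ k := by
      rw [← Finset.sum_sub_distrib]
      exact Finset.sum_congr rfl fun k _ => by ring
    rw [hsub]
    ring
  have hvanish := stmt2_poly_vanish a (fun k => q k - cg k) hdiffo
  have hcgq : ∀ k ≤ a, cg k = q k := by
    intro k hk
    have h0 := hvanish k hk
    linarith [h0]
  -- factorials are nonzero
  have hfact : ∀ m : ℕ, (Nat.factorial m : ℝ) ≠ 0 := fun m => by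
    exact_mod_cast (Nat.factorial_pos m).ne'
  have hE : ∀ j : ℕ, j ≤ a → iteratedDeriv j φ 0
      = iteratedFDerivWithin ℝ j f U x (fun _ => w) := by
    intro j hj
    exact stmt2_iteratedDeriv_line f hU hxU w hf hj
  have hLW : L = fderivWithin ℝ f U x w' := by
    rw [hLdef, fderivWithin_of_isOpen hU hxU]
  refine ⟨?_, ?_, ?_, ?_⟩
  · -- case k = j*b < a
    intro j k hj hkjb hka
    have hdvd : b ∣ k := hkjb ▸ dvd_mul_left b j
    have hkdb : k / b = j := by rw [hkjb, Nat.mul_div_cancel j hb]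
    have hja : j ≤ a := le_trans (Nat.le_mul_of_pos_right j hb) (hkjb ▸ hka.le)
    have hqk : q k = d j := by
      simp only [hqdef, if_neg hka.ne, if_pos hdvd, hkdb, zero_add]
    have h1' : cg k = d j := (hcgq k hka.le).trans hqk
    rw [one_div, one_div, inv_mul_eq_div, inv_mul_eq_div, ← hE j hja]
    exact h1'
  · -- case ¬ b ∣ k
    intro k hka hndvd hk0
    have hqk : q k = 0 := by
      simp only [hqdef, if_neg hka.ne, if_neg hndvd, add_zero, zero_add]
    have h1' : cg k = 0 := (hcgq k hka.le).trans hqk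
    have h2' : iteratedDeriv k g 0 / (Nat.factorial k : ℝ) = 0 := h1'
    exact (div_eq_zero_iff.1 h2').resolve_right (hfact k)
  · -- case k = a, ¬ b ∣ a
    intro hndvd
    have hqa : q a = L := by
      simp [hqdef, if_neg hndvd]
    have h1' : cg a = L := (hcgq a le_rfl).trans hqa
    rw [one_div, inv_mul_eq_div, ← hLW]
    exact h1'
  · -- case a = j * b
    intro j hajb
    have hdvd : b ∣ a := hajb ▸ dvd_mul_left b j
    have hadb : a / b = j := by rw [hajb, Nat.mul_div_cancel j hb]
    have hja : j ≤ a := le_trans (Nat.le_mul_of_pos_right j hb) hajb.ge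
    have hqa : q a = L + d j := by
      simp [hqdef, if_pos hdvd, hadb]
    have h1' : cg a = L + d j := (hcgq a le_rfl).trans hqa
    rw [one_div, one_div, inv_mul_eq_div, inv_mul_eq_div, ← hE j hja, ← hLW]
    exact h1'
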